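/- arXiv:2508.07036 — 3 statements merged into one kernel-verified Lean document; each statement's English description precedes it below -/
import Mathlib

section
/- Let a < b be reals, let ω be a weight function on [a,b], let m ≥ 1 and N ≥ 3 be integers, and let π_m be an m-th orthogonal polynomial with respect to ω on [a,b]; assume π_m(a) ≠ 0 and π_m(b) ≠ 0. Then (π_m(b)/π_m(a))^N ≠ 1 if and only if the following unisolvence property holds: whenever f_1, …, f_N are real polynomials of degree at most m such that ∫_a^b f_i(x) q(x) ω(x) dx = 0 for every i = 1, …, N and every polynomial q of degree at most m−1, and the cyclic matching conditions f_i(b) = f_{i+1}(a) for i = 1, …, N−1 and f_N(b) = f_1(a) hold, then f_1 = ⋯ = f_N = 0. -/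
open MeasureTheory intervalIntegral Polynomial

private lemma integ_aux (a b : ℝ) (ω : ℝ → ℝ)
    (hω_mom : ∀ n : ℕ, IntervalIntegrable (fun x => x ^ n * ω x) MeasureTheory.volume a b)
    (p : Polynomial ℝ) :
    IntervalIntegrable (fun x => p.eval x * ω x) MeasureTheory.volume a b := by
  induction p using Polynomial.induction_on' with
  | add p q hp hq => simpa [add_mul] using hp.add hq
  | monomial n c =>
      have := (hω_mom n).const_mul c
      simpa [Polynomial.eval_monomial, mul_assoc] using this

set_option maxHeartbeats 1000000 in
private lemma sq_zero (a b : ℝ) (hab : a < b) (ω : ℝ → ℝ)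
    (hω_nonneg : ∀ x ∈ Set.Icc a b, 0 ≤ ω x)
    (hω_mom : ∀ n : ℕ, IntervalIntegrable (fun x => x ^ n * ω x) MeasureTheory.volume a b)
    (hω_pos : 0 < ∫ x in a..b, ω x)
    (g : Polynomial ℝ)
    (hzero : ∫ x in a..b, g.eval x * g.eval x * ω x = 0) : g = 0 := by
  by_contra hg
  have hle : a ≤ b := hab.le
  have hint : IntervalIntegrable (fun x => g.eval x * g.eval x * ω x)
      MeasureTheory.volume a b := by
    simpa [Polynomial.eval_mul, mul_assoc] using integ_aux a b ω hω_mom (g * g)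
  have hIoc : IntegrableOn (fun x => g.eval x * g.eval x * ω x) (Set.Ioc a b)
      MeasureTheory.volume := hint.1
  have hnn : 0 ≤ᵐ[MeasureTheory.volume.restrict (Set.Ioc a b)]
      fun x => g.eval x * g.eval x * ω x := by
    refine (ae_restrict_iff' measurableSet_Ioc).2 (Filter.Eventually.of_forall ?_)
    intro x hx
    exact mul_nonneg (mul_self_nonneg _) (hω_nonneg x (Set.Ioc_subset_Icc_self hx))
  have h0 : ∫ x in Set.Ioc a b, g.eval x * g.eval x * ω x = 0 := by
    rw [← intervalIntegral.integral_of_le hle]; exact hzero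
  have hae : (fun x => g.eval x * g.eval x * ω x)
      =ᵐ[MeasureTheory.volume.restrict (Set.Ioc a b)] 0 := by
    have := MeasureTheory.integral_eq_zero_iff_of_nonneg_ae hnn hIoc
    exact this.1 h0
  have hroots : ({x : ℝ | g.IsRoot x}).Finite := Polynomial.finite_setOf_isRoot hg
  have haeg : ∀ᵐ x ∂(MeasureTheory.volume.restrict (Set.Ioc a b)), g.eval x ≠ 0 := by
    refine MeasureTheory.ae_restrict_of_ae ?_
    rw [MeasureTheory.ae_iff]
    have : {x : ℝ | ¬ g.eval x ≠ 0} = {x : ℝ | g.IsRoot x} := by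
      ext x; simp [Polynomial.IsRoot]
    rw [this]
    exact hroots.measure_zero _
  have hω0 : ω =ᵐ[MeasureTheory.volume.restrict (Set.Ioc a b)] 0 := by
    filter_upwards [hae, haeg] with x h1 h2
    rcases mul_eq_zero.mp h1 with h | h
    · exact absurd (mul_self_eq_zero.mp h) h2
    · exact h
  have : ∫ x in a..b, ω x = 0 := by
    rw [intervalIntegral.integral_of_le hle]
    exact MeasureTheory.integral_eq_zero_of_ae hω0
  linarith

private lemma rep_lemma (a b : ℝ) (hab : a < b) (ω : ℝ → ℝ)
    (hω_nonneg : ∀ x ∈ Set.Icc a b, 0 ≤ ω x)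
    (hω_mom : ∀ n : ℕ, IntervalIntegrable (fun x => x ^ n * ω x) MeasureTheory.volume a b)
    (hω_pos : 0 < ∫ x in a..b, ω x)
    (m : ℕ) (P : Polynomial ℝ) (hPdeg : P.degree = (m : WithBot ℕ))
    (hPorth : ∀ q : Polynomial ℝ, q.degree < (m : WithBot ℕ) →
      ∫ x in a..b, P.eval x * q.eval x * ω x = 0)
    (f : Polynomial ℝ) (hfdeg : f.degree ≤ (m : WithBot ℕ))
    (hforth : ∀ q : Polynomial ℝ, q.degree < (m : WithBot ℕ) →
      ∫ x in a..b, f.eval x * q.eval x * ω x = 0) :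
    ∃ c : ℝ, f = c • P := by
  have hPm : P.coeff m ≠ 0 := Polynomial.coeff_ne_zero_of_eq_degree hPdeg
  set c := f.coeff m / P.coeff m with hc
  set g := f - c • P with hg
  have hgm : g.coeff m = 0 := by
    simp only [hg, Polynomial.coeff_sub, Polynomial.coeff_smul, smul_eq_mul, hc]
    field_simp
    ring
  have hgdeg : g.degree < (m : WithBot ℕ) := by
    rw [Polynomial.degree_lt_iff_coeff_zero]
    intro k hk
    rcases eq_or_lt_of_le hk with h | h
    · rw [← h]; exact hgm
    · have h1 : f.coeff k = 0 :=
        Polynomial.coeff_eq_zero_of_degree_lt (lt_of_le_of_lt hfdeg (Nat.cast_lt.2 h))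
      have h2 : P.coeff k = 0 :=
        Polynomial.coeff_eq_zero_of_degree_lt (by rw [hPdeg]; exact_mod_cast h)
      simp [hg, h1, h2]
  have h1 := hforth g hgdeg
  have h2 := hPorth g hgdeg
  have hint1 : IntervalIntegrable (fun x => f.eval x * g.eval x * ω x)
      MeasureTheory.volume a b := by
    simpa [Polynomial.eval_mul, mul_assoc] using integ_aux a b ω hω_mom (f * g)
  have hint2 : IntervalIntegrable (fun x => P.eval x * g.eval x * ω x)
      MeasureTheory.volume a b := by
    simpa [Polynomial.eval_mul, mul_assoc] using integ_aux a b ω hω_mom (P * g)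
  have hgorth : ∫ x in a..b, g.eval x * g.eval x * ω x = 0 := by
    have key : ∫ x in a..b, g.eval x * g.eval x * ω x
        = (∫ x in a..b, f.eval x * g.eval x * ω x)
          - ∫ x in a..b, c * (P.eval x * g.eval x * ω x) := by
      rw [← intervalIntegral.integral_sub hint1 (hint2.const_mul c)]
      congr 1; funext x
      simp only [hg, Polynomial.eval_sub, Polynomial.eval_smul, smul_eq_mul]
      ring
    rw [key, h1, intervalIntegral.integral_const_mul, h2, mul_zero, sub_zero]
  have hg0 : g = 0 := sq_zero a b hab ω hω_nonneg hω_mom hω_pos g hgorth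
  exact ⟨c, by rw [← sub_eq_zero]; exact hg0⟩

/-- Unisolvence characterization (Theorem 1 of the paper).
Let `a < b`, `ω` a weight function on `[a,b]`, `m ≥ 1`, `N ≥ 3`, and `P` an `m`-th
orthogonal polynomial w.r.t. `ω` with `P a ≠ 0` and `P b ≠ 0`.  Then
`(P b / P a)^N ≠ 1` iff the unisolvence property for cyclically matched
edgewise polynomials of degree ≤ m holds. -/
theorem stmt_0 (a b : ℝ) (hab : a < b) (ω : ℝ → ℝ)
    (hω_nonneg : ∀ x ∈ Set.Icc a b, 0 ≤ ω x)
    (hω_mom : ∀ n : ℕ, IntervalIntegrable (fun x => x ^ n * ω x) MeasureTheory.volume a b)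
    (hω_pos : 0 < ∫ x in a..b, ω x)
    (m N : ℕ) (hm : 1 ≤ m) (hN : 3 ≤ N)
    (P : Polynomial ℝ) (hPdeg : P.degree = (m : WithBot ℕ))
    (hPorth : ∀ q : Polynomial ℝ, q.degree < (m : WithBot ℕ) →
      ∫ x in a..b, P.eval x * q.eval x * ω x = 0)
    (ha : P.eval a ≠ 0) (hb : P.eval b ≠ 0) :
    (P.eval b / P.eval a) ^ N ≠ 1 ↔
      (∀ f : ℕ → Polynomial ℝ,
        (∀ i, 1 ≤ i → i ≤ N → (f i).degree ≤ (m : WithBot ℕ)) →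
        (∀ i, 1 ≤ i → i ≤ N → ∀ q : Polynomial ℝ, q.degree < (m : WithBot ℕ) →
          ∫ x in a..b, (f i).eval x * q.eval x * ω x = 0) →
        (∀ i, 1 ≤ i → i ≤ N - 1 → (f i).eval b = (f (i + 1)).eval a) →
        (f N).eval b = (f 1).eval a →
        ∀ i, 1 ≤ i → i ≤ N → f i = 0) := by
  set r : ℝ := P.eval b / P.eval a with hr
  constructor
  · intro hrN f hdeg horth hmatch hcyc
    have hrep : ∀ i, 1 ≤ i → i ≤ N → ∃ c : ℝ, f i = c • P := fun i h1 h2 =>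
      rep_lemma a b hab ω hω_nonneg hω_mom hω_pos m P hPdeg hPorth (f i)
        (hdeg i h1 h2) (horth i h1 h2)
    have hevb : ∀ i, 1 ≤ i → i ≤ N → (f i).eval b = r * (f i).eval a := by
      intro i h1 h2
      obtain ⟨c, hc⟩ := hrep i h1 h2
      rw [hc]
      simp only [Polynomial.eval_smul, smul_eq_mul, hr]
      field_simp
    have hzero_of : ∀ i, 1 ≤ i → i ≤ N → (f i).eval a = 0 → f i = 0 := by
      intro i h1 h2 h3
      obtain ⟨c, hc⟩ := hrep i h1 h2
      rw [hc] at h3 ⊢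
      simp only [Polynomial.eval_smul, smul_eq_mul] at h3
      rcases mul_eq_zero.mp h3 with h | h
      · rw [h, zero_smul]
      · exact absurd h ha
    have hrec : ∀ i, 1 ≤ i → i ≤ N → (f i).eval a = r ^ (i - 1) * (f 1).eval a := by
      intro i
      induction i with
      | zero => omega
      | succ j ih =>
        intro h1 h2
        rcases Nat.eq_zero_or_pos j with hj | hj
        · subst hj; simp
        · have hmj : (f j).eval b = (f (j + 1)).eval a := hmatch j hj (by omega)
          have : (f (j + 1)).eval a = r * (f j).eval a := by
            rw [← hmj]; exact hevb j hj (by omega)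
          rw [this, ih hj (by omega)]
          have he : r ^ (j + 1 - 1) = r ^ (j - 1) * r := by
            rw [← pow_succ]; congr 1; omega
          rw [he]; ring
    have hNc : (f 1).eval a = r ^ N * (f 1).eval a := by
      have h1 : (f N).eval b = r * (f N).eval a := hevb N (by omega) le_rfl
      have h2 : (f N).eval a = r ^ (N - 1) * (f 1).eval a := hrec N (by omega) le_rfl
      have he : r ^ N = r ^ (N - 1) * r := by
        rw [← pow_succ]; congr 1; omega
      calc (f 1).eval a = (f N).eval b := hcyc.symm
        _ = r * (f N).eval a := h1
        _ = r * (r ^ (N - 1) * (f 1).eval a) := by rw [h2]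
        _ = r ^ N * (f 1).eval a := by rw [he]; ring
    have hv1 : (f 1).eval a = 0 := by
      by_contra h
      apply hrN
      have : (r ^ N - 1) * (f 1).eval a = 0 := by linarith
      rcases mul_eq_zero.mp this with h' | h'
      · linarith
      · exact absurd h' h
    intro i hi1 hiN
    exact hzero_of i hi1 hiN (by rw [hrec i hi1 hiN, hv1, mul_zero])
  · intro hU hrN
    have hr0 : r ≠ 0 := div_ne_zero hb ha
    set f : ℕ → Polynomial ℝ := fun i => (r ^ (i - 1)) • P with hf
    have hdeg : ∀ i, 1 ≤ i → i ≤ N → (f i).degree ≤ (m : WithBot ℕ) := by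
      intro i _ _
      exact (Polynomial.degree_smul_le _ _).trans hPdeg.le
    have horth : ∀ i, 1 ≤ i → i ≤ N → ∀ q : Polynomial ℝ, q.degree < (m : WithBot ℕ) →
        ∫ x in a..b, (f i).eval x * q.eval x * ω x = 0 := by
      intro i _ _ q hq
      have : (fun x => (f i).eval x * q.eval x * ω x)
          = fun x => r ^ (i - 1) * (P.eval x * q.eval x * ω x) := by
        funext x
        simp only [hf, Polynomial.eval_smul, smul_eq_mul]
        ring
      rw [this, intervalIntegral.integral_const_mul, hPorth q hq, mul_zero]
    have hmatch : ∀ i, 1 ≤ i → i ≤ N - 1 → (f i).eval b = (f (i + 1)).eval a := by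
      intro i h1 _
      simp only [hf, Polynomial.eval_smul, smul_eq_mul]
      have he : r ^ (i + 1 - 1) = r ^ (i - 1) * r := by
        rw [← pow_succ]; congr 1; omega
      rw [he, hr]
      field_simp
    have hcyc : (f N).eval b = (f 1).eval a := by
      simp only [hf, Polynomial.eval_smul, smul_eq_mul]
      have he : r ^ N = r ^ (N - 1) * r := by
        rw [← pow_succ]; congr 1; omega
      have : r ^ (N - 1) * P.eval b = r ^ N * P.eval a := by
        rw [he, hr]
        field_simp
      rw [this, hrN]
      simp
    have := hU f hdeg horth hmatch hcyc 1 le_rfl (by omega)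
    simp only [hf] at this
    rw [show (1 : ℕ) - 1 = 0 from rfl, pow_zero, one_smul] at this
    exact ha (by rw [this, Polynomial.eval_zero])
end

section
/- Let α, β > −1 with α ≠ β, and let m ≥ 1 and N ≥ 1 be integers. Let p be the monic Jacobi polynomial of degree m for parameters (α, β). Then (p(1)/p(−1))^N ≠ 1. -/
open MeasureTheory intervalIntegral Set Polynomial Filter Topology

lemma jac_meas (a b : ℝ) (P : Polynomial ℝ) :
    Measurable (fun t : ℝ => P.eval t * ((1-t)^a * (1+t)^b)) := by
  have h1 : Measurable fun t : ℝ => P.eval t := by fun_prop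
  have h2 : Measurable fun t : ℝ => (1-t)^a := by fun_prop
  have h3 : Measurable fun t : ℝ => (1+t)^b := by fun_prop
  exact h1.mul (h2.mul h3)

lemma jac_int (a b : ℝ) (ha : -1 < a) (hb : -1 < b) (P : Polynomial ℝ) :
    IntervalIntegrable (fun t => P.eval t * ((1-t)^a * (1+t)^b)) volume (-1) 1 := by
  have h1 : IntervalIntegrable (fun t : ℝ => (1-t)^a) volume 0 1 := by
    have := (intervalIntegrable_rpow' (a := 0) (b := 1) ha).comp_sub_left 1
    norm_num at this
    exact this.symm
  have h2 : IntervalIntegrable (fun t : ℝ => (1+t)^b) volume (-1) 0 := by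
    have := (intervalIntegrable_rpow' (a := 0) (b := 1) hb).comp_add_right 1
    norm_num at this
    convert this using 2 with t
    ring_nf
  -- bound on [0,1]
  obtain ⟨C, hC⟩ : ∃ C, ∀ t ∈ Icc (0:ℝ) 1, ‖P.eval t * (1+t)^b‖ ≤ C := by
    apply isCompact_Icc.exists_bound_of_continuousOn
    apply ContinuousOn.mul (P.continuous_aeval.continuousOn)
    intro t ht
    exact ((Real.continuousAt_rpow_const _ _ (Or.inl (by nlinarith [ht.1]))).comp
      (by fun_prop : Continuous fun t : ℝ => 1 + t).continuousAt).continuousWithinAt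
  obtain ⟨D, hD⟩ : ∃ D, ∀ t ∈ Icc (-1:ℝ) 0, ‖P.eval t * (1-t)^a‖ ≤ D := by
    apply isCompact_Icc.exists_bound_of_continuousOn
    apply ContinuousOn.mul (P.continuous_aeval.continuousOn)
    intro t ht
    exact ((Real.continuousAt_rpow_const _ _ (Or.inl (by nlinarith [ht.2]))).comp
      (by fun_prop : Continuous fun t : ℝ => 1 - t).continuousAt).continuousWithinAt
  have key1 : IntervalIntegrable (fun t => P.eval t * ((1-t)^a * (1+t)^b)) volume 0 1 := by
    refine ((h1.const_mul C).mono_fun ((jac_meas a b P).aestronglyMeasurable.restrict) ?_)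
    filter_upwards [ae_restrict_mem measurableSet_uIoc] with t ht

    rw [uIoc_of_le (by norm_num : (0:ℝ) ≤ 1)] at ht
    have h1t : (0:ℝ) ≤ 1 - t := by linarith [ht.2]
    have hmt : (0:ℝ) ≤ (1-t)^a := Real.rpow_nonneg h1t a
    calc ‖P.eval t * ((1-t)^a * (1+t)^b)‖
        = ‖P.eval t * (1+t)^b‖ * (1-t)^a := by
          rw [norm_mul, norm_mul, norm_mul]
          rw [Real.norm_of_nonneg hmt]; ring
      _ ≤ C * (1-t)^a := by
          apply mul_le_mul_of_nonneg_right _ hmt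
          exact hC t ⟨ht.1.le, ht.2⟩
      _ ≤ ‖C * (1-t)^a‖ := le_abs_self _
  have key2 : IntervalIntegrable (fun t => P.eval t * ((1-t)^a * (1+t)^b)) volume (-1) 0 := by
    refine ((h2.const_mul D).mono_fun ((jac_meas a b P).aestronglyMeasurable.restrict) ?_)
    filter_upwards [ae_restrict_mem measurableSet_uIoc] with t ht

    rw [uIoc_of_le (by norm_num : (-1:ℝ) ≤ 0)] at ht
    have h1t : (0:ℝ) ≤ 1 + t := by linarith [ht.1]
    have hmt : (0:ℝ) ≤ (1+t)^b := Real.rpow_nonneg h1t b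
    calc ‖P.eval t * ((1-t)^a * (1+t)^b)‖
        = ‖P.eval t * (1-t)^a‖ * (1+t)^b := by
          rw [norm_mul, norm_mul, norm_mul]
          rw [Real.norm_of_nonneg hmt]; ring
      _ ≤ D * (1+t)^b := by
          apply mul_le_mul_of_nonneg_right _ hmt
          exact hD t ⟨ht.1.le, ht.2⟩
      _ ≤ ‖D * (1+t)^b‖ := le_abs_self _
  exact key2.trans key1

noncomputable def Gp (α β : ℝ) (m : ℕ) : ℕ → Polynomial ℝ
  | 0 => 1
  | (k+1) => (1 - X^2) * (Gp α β m k).derivative +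
      (C (β + m - k) * (1 - X) - C (α + m - k) * (1 + X)) * Gp α β m k

lemma Gp_natDegree_le (α β : ℝ) (m : ℕ) : ∀ k, (Gp α β m k).natDegree ≤ k := by
  intro k
  induction k with
  | zero => simp [Gp]
  | succ k ih =>
    rw [Gp]
    refine le_trans (natDegree_add_le _ _) (max_le ?_ ?_)
    · rcases Nat.eq_zero_or_pos k with hk | hk
      · subst hk; simp [Gp]
      · refine le_trans (natDegree_mul_le) ?_
        have h1 : (1 - X^2 : Polynomial ℝ).natDegree ≤ 2 := by compute_degree
        have h2 : (Gp α β m k).derivative.natDegree ≤ k - 1 :=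
          le_trans (natDegree_derivative_le _) (by omega)
        omega
    · refine le_trans (natDegree_mul_le) ?_
      have h1 : ((C (β + (m:ℝ) - k) * (1 - X) - C (α + (m:ℝ) - k) * (1 + X))).natDegree ≤ 1 := by
        compute_degree
      omega

lemma Gp_coeff (α β : ℝ) (m : ℕ) : ∀ k, (Gp α β m k).coeff k =
    ∏ j ∈ Finset.range k, (-(α + β + 2*m - j)) := by
  intro k
  induction k with
  | zero => simp [Gp]
  | succ k ih =>
    rw [Finset.prod_range_succ, ← ih, Gp]
    have hle := Gp_natDegree_le α β m k
    have hco : (Gp α β m k).coeff (k+1) = 0 :=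
      coeff_eq_zero_of_natDegree_lt (by omega)
    have e1 : (C (β + (m:ℝ) - k) * (1 - X) - C (α + (m:ℝ) - k) * (1 + X)) * Gp α β m k
        = C (β - α) * Gp α β m k - C (α + m - k + (β + m - k)) * (X * Gp α β m k) := by
      simp only [map_add, map_sub]; ring
    have hd : ((1 - X^2) * (Gp α β m k).derivative).coeff (k+1)
        = -((Gp α β m k).coeff k * k) := by
      rcases Nat.eq_zero_or_pos k with hk | hk
      · subst hk; simp [Gp]
      · have : (1 - X^2 : Polynomial ℝ) * (Gp α β m k).derivative
            = (Gp α β m k).derivative - X^2 * (Gp α β m k).derivative := by ring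
        rw [this, coeff_sub]
        have h2 : ((Gp α β m k).derivative).coeff (k+1) = 0 :=
          coeff_eq_zero_of_natDegree_lt (lt_of_le_of_lt (natDegree_derivative_le _) (by omega))
        obtain ⟨j, rfl⟩ : ∃ j, k = j + 1 := ⟨k - 1, by omega⟩
        have h3 : (X^2 * (Gp α β m (j+1)).derivative).coeff (j + 2)
            = ((Gp α β m (j+1)).derivative).coeff j := by
          simpa using coeff_X_pow_mul ((Gp α β m (j+1)).derivative) 2 j
        have h4 : ((Gp α β m (j+1)).derivative).coeff j
            = (Gp α β m (j+1)).coeff (j+1) * (j+1) := by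
          simp [coeff_derivative]
        rw [h2]
        have : j + 1 + 1 = j + 2 := by omega
        rw [this, h3, h4]
        push_cast
        ring
    rw [coeff_add, hd, e1, coeff_sub, coeff_C_mul, coeff_C_mul, coeff_X_mul, hco]
    push_cast
    ring

lemma Gp_eval_one (α β : ℝ) (m : ℕ) : ∀ k, (Gp α β m k).eval 1 =
    ∏ j ∈ Finset.range k, (-2*(α + m - j)) := by
  intro k
  induction k with
  | zero => simp [Gp]
  | succ k ih => rw [Finset.prod_range_succ, ← ih, Gp]; simp; ring

lemma Gp_eval_neg_one (α β : ℝ) (m : ℕ) : ∀ k, (Gp α β m k).eval (-1) =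
    ∏ j ∈ Finset.range k, (2*(β + m - j)) := by
  intro k
  induction k with
  | zero => simp [Gp]
  | succ k ih => rw [Finset.prod_range_succ, ← ih, Gp]; simp; ring

lemma Gp_hasDerivAt (α β : ℝ) (m k : ℕ) (r : Polynomial ℝ) {t : ℝ}
    (ht : t ∈ Ioo (-1 : ℝ) 1) :
    HasDerivAt (fun t : ℝ => (1-t)^(α+m-k) * (1+t)^(β+m-k) * (Gp α β m k * r).eval t)
      ((Gp α β m (k+1) * r).eval t * ((1-t)^(α+m-k-1) * (1+t)^(β+m-k-1))
        + (Gp α β m k * r.derivative).eval t * ((1-t)^(α+m-k) * (1+t)^(β+m-k))) t := by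
  obtain ⟨ht1, ht2⟩ := ht
  have h1 : (0:ℝ) < 1 - t := by linarith
  have h2 : (0:ℝ) < 1 + t := by linarith
  set A := α + (m:ℝ) - k with hA
  set B := β + (m:ℝ) - k with hB
  have dsub : HasDerivAt (fun t : ℝ => 1 - t) (-1) t := by
    simpa using (hasDerivAt_id t).const_sub 1
  have dadd : HasDerivAt (fun t : ℝ => 1 + t) 1 t := by
    simpa using (hasDerivAt_id t).const_add 1
  have d1 : HasDerivAt (fun t : ℝ => (1-t)^A) (A * (1-t)^(A-1) * (-1)) t :=
    (Real.hasDerivAt_rpow_const (Or.inl h1.ne')).comp t dsub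
  have d2 : HasDerivAt (fun t : ℝ => (1+t)^B) (B * (1+t)^(B-1) * 1) t :=
    (Real.hasDerivAt_rpow_const (p := B) (Or.inl h2.ne')).comp t dadd
  have d3 : HasDerivAt (fun t : ℝ => (Gp α β m k * r).eval t)
      ((Gp α β m k * r).derivative.eval t) t := (Gp α β m k * r).hasDerivAt t
  have := (d1.mul d2).mul d3
  refine this.congr_deriv ?_
  have e1 : (1-t)^A = (1-t)^(A-1) * (1-t) := by
    rw [← Real.rpow_add_one h1.ne']; ring_nf
  have e2 : (1+t)^B = (1+t)^(B-1) * (1+t) := by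
    rw [← Real.rpow_add_one h2.ne']; ring_nf
  rw [Gp.eq_2]
  simp only [derivative_mul, eval_add, eval_mul, eval_sub, eval_one, eval_pow, eval_X,
    eval_C, e1, e2, Pi.mul_apply]
  ring

lemma ibp_step (α β : ℝ) (hα : -1 < α) (hβ : -1 < β) (m k : ℕ) (hk : k < m)
    (r : Polynomial ℝ) :
    ∫ t in (-1:ℝ)..1, (Gp α β m (k+1) * r).eval t * ((1-t)^(α+m-(k+1)) * (1+t)^(β+m-(k+1)))
      = - ∫ t in (-1:ℝ)..1, (Gp α β m k * r.derivative).eval t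
          * ((1-t)^(α+m-k) * (1+t)^(β+m-k)) := by
  have hkm : (k:ℝ) + 1 ≤ m := by exact_mod_cast hk
  set A := α + (m:ℝ) - k with hA
  set B := β + (m:ℝ) - k with hB
  have hA0 : 0 < A := by rw [hA]; linarith
  have hB0 : 0 < B := by rw [hB]; linarith
  have hA1 : -1 < A - 1 := by linarith
  have hB1 : -1 < B - 1 := by linarith
  set f : ℝ → ℝ := fun t => (1-t)^A * (1+t)^B * (Gp α β m k * r).eval t with hf
  set g1 : ℝ → ℝ := fun t => (Gp α β m (k+1) * r).eval t * ((1-t)^(A-1) * (1+t)^(B-1)) with hg1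
  set g2 : ℝ → ℝ := fun t => (Gp α β m k * r.derivative).eval t * ((1-t)^A * (1+t)^B) with hg2
  have hderiv : ∀ t ∈ Ioo (-1:ℝ) 1, HasDerivAt f (g1 t + g2 t) t :=
    fun t ht => Gp_hasDerivAt α β m k r ht
  have hint1 : IntervalIntegrable g1 volume (-1) 1 := jac_int _ _ hA1 hB1 _
  have hint2 : IntervalIntegrable g2 volume (-1) 1 := jac_int _ _ (by linarith) (by linarith) _
  -- tendsto at the endpoints
  have hconta : ContinuousAt f (-1) := by
    apply ContinuousAt.mul (ContinuousAt.mul ?_ ?_) ((Gp α β m k * r).continuous_aeval.continuousAt)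
    · exact (Real.continuousAt_rpow_const _ _ (Or.inl (by norm_num))).comp (by fun_prop)
    · exact (Real.continuousAt_rpow_const _ _ (Or.inr hB0.le)).comp (by fun_prop)
  have hcontb : ContinuousAt f 1 := by
    apply ContinuousAt.mul (ContinuousAt.mul ?_ ?_) ((Gp α β m k * r).continuous_aeval.continuousAt)
    · exact (Real.continuousAt_rpow_const _ _ (Or.inr hA0.le)).comp (by fun_prop)
    · exact (Real.continuousAt_rpow_const _ _ (Or.inl (by norm_num))).comp (by fun_prop)
  have hfa : f (-1) = 0 := by
    rw [hf]
    simp only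
    rw [show ((1:ℝ) - (-1)) = 2 by norm_num, show ((1:ℝ) + (-1)) = 0 by norm_num,
      Real.zero_rpow hB0.ne']
    ring
  have hfb : f 1 = 0 := by
    rw [hf]
    simp only
    rw [show ((1:ℝ) - 1) = 0 by norm_num, Real.zero_rpow hA0.ne']
    ring
  have key : (∫ t in (-1:ℝ)..1, g1 t) + ∫ t in (-1:ℝ)..1, g2 t = 0 := by
    have h := integral_eq_sub_of_hasDerivAt_of_tendsto (f := f) (f' := fun t => g1 t + g2 t)
      (by norm_num : (-1:ℝ) < 1) hderiv (hint1.add hint2)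
      (hconta.tendsto.mono_left nhdsWithin_le_nhds)
      (hcontb.tendsto.mono_left nhdsWithin_le_nhds)
    rw [hfa, hfb, sub_zero] at h
    rw [← integral_add hint1 hint2]
    exact h
  have e1 : α + (m:ℝ) - ((k:ℝ)+1) = A - 1 := by rw [hA]; ring
  have e2 : β + (m:ℝ) - ((k:ℝ)+1) = B - 1 := by rw [hB]; ring
  push_cast
  rw [e1, e2]
  show (∫ t in (-1:ℝ)..1, g1 t) = - ∫ t in (-1:ℝ)..1, g2 t
  linarith [key]

lemma Gp_orth (α β : ℝ) (hα : -1 < α) (hβ : -1 < β) (m : ℕ)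
    (q : Polynomial ℝ) (hq : q.degree < (m : WithBot ℕ)) :
    ∫ t in (-1:ℝ)..1, (Gp α β m m).eval t * q.eval t * ((1-t)^α * (1+t)^β) = 0 := by
  have main : ∀ k, k ≤ m → ∀ r : Polynomial ℝ,
      (∫ t in (-1:ℝ)..1, (Gp α β m k * r).eval t * ((1-t)^(α+m-k) * (1+t)^(β+m-k)))
        = (-1:ℝ)^k * ∫ t in (-1:ℝ)..1,
            (Gp α β m 0 * (Polynomial.derivative^[k] r)).eval t
              * ((1-t)^(α+m-0) * (1+t)^(β+m-0)) := by
    intro k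
    induction k with
    | zero => intro _ r; simp
    | succ k ih =>
      intro hk r
      push_cast
      rw [ibp_step α β hα hβ m k (by omega) r, ih (by omega) r.derivative,
        Function.iterate_succ_apply]
      ring
  have hqd : Polynomial.derivative^[m] q = 0 := by
    rcases eq_or_ne q 0 with rfl | hq0
    · simp
    · exact iterate_derivative_eq_zero ((natDegree_lt_iff_degree_lt hq0).mpr hq)
  have h0 : (∫ t in (-1:ℝ)..1, (Gp α β m m * q).eval t * ((1-t)^(α+m-m) * (1+t)^(β+m-m))) = 0 := by
    rw [main m le_rfl q, hqd]
    simp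
  rw [show α + (m:ℝ) - (m:ℝ) = α from by ring, show β + (m:ℝ) - (m:ℝ) = β from by ring] at h0
  simpa only [eval_mul] using h0


/-- For the monic Jacobi polynomial `p` of degree `m` with parameters
`α ≠ β`, both `> -1`, one has `(p(1)/p(-1))^N ≠ 1` for every `N ≥ 1`. -/
theorem stmt_8 (α β : ℝ) (hα : -1 < α) (hβ : -1 < β) (hαβ : α ≠ β)
    (m N : ℕ) (hm : 1 ≤ m) (hN : 1 ≤ N)
    (p : Polynomial ℝ) (hmonic : p.Monic) (hpdeg : p.degree = (m : WithBot ℕ))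
    (hporth : ∀ q : Polynomial ℝ, q.degree < (m : WithBot ℕ) →
      ∫ t in (-1 : ℝ)..1, p.eval t * q.eval t * ((1 - t) ^ α * (1 + t) ^ β) = 0) :
    (p.eval 1 / p.eval (-1)) ^ N ≠ 1 := by
  have hm1 : (1:ℝ) ≤ m := by exact_mod_cast hm
  have hjrange : ∀ j ∈ Finset.range m, (j:ℝ) ≤ (m:ℝ) - 1 := by
    intro j hj
    have : j + 1 ≤ m := Finset.mem_range.mp hj
    have : (j:ℝ) + 1 ≤ m := by exact_mod_cast this
    linarith
  set c : ℝ := ∏ j ∈ Finset.range m, (-(α + β + 2*m - j)) with hc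
  have hcne : c ≠ 0 := by
    rw [hc]
    apply Finset.prod_ne_zero_iff.mpr
    intro j hj
    have := hjrange j hj
    have : (0:ℝ) < α + β + 2*m - j := by linarith
    exact neg_ne_zero.mpr this.ne'
  set g : Polynomial ℝ := C c⁻¹ * Gp α β m m with hg
  have hgm : (Gp α β m m).coeff m = c := Gp_coeff α β m m
  have hgdeg := Gp_natDegree_le α β m m
  have hpnat : p.natDegree = m := natDegree_eq_of_degree_eq_some hpdeg
  have hcoeffp : p.coeff m = 1 := by rw [← hpnat]; exact hmonic.coeff_natDegree
  set h : Polynomial ℝ := p - g with hh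
  have hhdeg : h.degree < (m : WithBot ℕ) := by
    rw [degree_lt_iff_coeff_zero]
    intro i hi
    rw [hh, coeff_sub, hg, coeff_C_mul]
    have hi' : m ≤ i := by exact_mod_cast hi
    rcases eq_or_lt_of_le hi' with rfl | hi2
    · rw [hcoeffp, hgm, inv_mul_cancel₀ hcne, sub_self]
    · rw [coeff_eq_zero_of_degree_lt (hpdeg ▸ (by exact_mod_cast hi2 : (m : WithBot ℕ) < i)),
        coeff_eq_zero_of_natDegree_lt (lt_of_le_of_lt hgdeg hi2)]
      ring
  have hgorth : ∀ q : Polynomial ℝ, q.degree < (m : WithBot ℕ) →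
      ∫ t in (-1:ℝ)..1, g.eval t * q.eval t * ((1-t)^α * (1+t)^β) = 0 := by
    intro q hq
    have horth := Gp_orth α β hα hβ m q hq
    have hfun : (∫ t in (-1:ℝ)..1, g.eval t * q.eval t * ((1-t)^α * (1+t)^β))
        = ∫ t in (-1:ℝ)..1, c⁻¹ * ((Gp α β m m).eval t * q.eval t * ((1-t)^α * (1+t)^β)) := by
      congr 1
      funext t
      rw [hg, eval_mul, eval_C]
      ring
    rw [hfun, intervalIntegral.integral_const_mul, horth, mul_zero]
  have hhorth : ∫ t in (-1:ℝ)..1, h.eval t * h.eval t * ((1-t)^α * (1+t)^β) = 0 := by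
    have h1 := hporth h hhdeg
    have h2 := hgorth h hhdeg
    have hint1 : IntervalIntegrable (fun t => p.eval t * h.eval t * ((1-t)^α * (1+t)^β))
        volume (-1) 1 := by
      have := jac_int α β hα hβ (p * h); simpa only [eval_mul] using this
    have hint2 : IntervalIntegrable (fun t => g.eval t * h.eval t * ((1-t)^α * (1+t)^β))
        volume (-1) 1 := by
      have := jac_int α β hα hβ (g * h); simpa only [eval_mul] using this
    have heq : (fun t : ℝ => h.eval t * h.eval t * ((1-t)^α * (1+t)^β))
        = fun t => p.eval t * h.eval t * ((1-t)^α * (1+t)^β)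
            - g.eval t * h.eval t * ((1-t)^α * (1+t)^β) := by
      funext t
      rw [hh]
      simp only [eval_sub]
      ring
    rw [heq, integral_sub hint1 hint2, h1, h2, sub_zero]
  -- h = 0
  have hh0 : h = 0 := by
    by_contra hne
    have hfin : {x | h.IsRoot x}.Finite := h.finite_setOf_isRoot hne
    have hU : IsOpen (Ioo (-1:ℝ) 1 \ {x | h.IsRoot x}) := isOpen_Ioo.sdiff hfin.isClosed
    have hinf : (Ioo (-1:ℝ) 1 \ {x | h.IsRoot x}).Infinite :=
      (Set.Ioo_infinite (by norm_num : (-1:ℝ) < 1)).diff hfin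
    obtain ⟨t₀, ht₀⟩ := hinf.nonempty
    obtain ⟨ε, hε, hball⟩ := Metric.isOpen_iff.mp hU t₀ ht₀
    set u := t₀ - ε/2 with hu
    set v := t₀ + ε/2 with hv
    have huv : u < v := by rw [hu, hv]; linarith
    have hsub : Icc u v ⊆ Ioo (-1:ℝ) 1 \ {x | h.IsRoot x} := by
      intro x hx
      apply hball
      rw [Metric.mem_ball, Real.dist_eq]
      rw [hu, hv] at hx
      rw [abs_lt]
      constructor <;> [linarith [hx.1]; linarith [hx.2]]
    have humem := hsub ⟨le_refl u, huv.le⟩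
    have hvmem := hsub ⟨huv.le, le_refl v⟩
    have hu1 : (-1:ℝ) < u := humem.1.1
    have hv1 : v < 1 := hvmem.1.2
    set f : ℝ → ℝ := fun t => h.eval t * h.eval t * ((1-t)^α * (1+t)^β) with hfdef
    have hfint : IntervalIntegrable f volume (-1) 1 := by
      have := jac_int α β hα hβ (h * h); simpa only [eval_mul] using this
    have hmono : ∀ a b : ℝ, -1 ≤ a → a ≤ b → b ≤ 1 → IntervalIntegrable f volume a b := by
      intro a b ha hab hb
      refine hfint.mono_set ?_
      rw [uIcc_of_le hab, uIcc_of_le (by norm_num : (-1:ℝ) ≤ 1)]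
      exact Icc_subset_Icc ha hb
    have hi1 := hmono (-1) u le_rfl (by linarith) (by linarith)
    have hi2 := hmono u v hu1.le huv.le hv1.le
    have hi3 := hmono v 1 (by linarith) (by linarith) le_rfl
    have hpos : 0 < ∫ t in u..v, f t := by
      apply intervalIntegral_pos_of_pos_on hi2 _ huv
      intro x hx
      have hx' := hsub (Ioo_subset_Icc_self hx)
      have hroot : eval x h ≠ 0 := fun hr => hx'.2 hr
      have hw := mul_pos (Real.rpow_pos_of_pos (by linarith [hx'.1.2] : (0:ℝ) < 1 - x) α)
        (Real.rpow_pos_of_pos (by linarith [hx'.1.1] : (0:ℝ) < 1 + x) β)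
      exact mul_pos (mul_self_pos.mpr hroot) hw
    have hnn : ∀ a b : ℝ, -1 ≤ a → a ≤ b → b ≤ 1 → 0 ≤ ∫ t in a..b, f t := by
      intro a b ha hab hb
      apply intervalIntegral.integral_nonneg hab
      intro x hx
      have hw := mul_nonneg (Real.rpow_nonneg (by linarith [hx.2] : (0:ℝ) ≤ 1 - x) α)
        (Real.rpow_nonneg (by linarith [hx.1] : (0:ℝ) ≤ 1 + x) β)
      exact mul_nonneg (mul_self_nonneg _) hw
    have hsplit : (∫ t in (-1:ℝ)..u, f t) + (∫ t in u..v, f t) + (∫ t in v..(1:ℝ), f t) = 0 := by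
      rw [integral_add_adjacent_intervals hi1 hi2,
        integral_add_adjacent_intervals (hi1.trans hi2) hi3]
      exact hhorth
    have n1 := hnn (-1) u le_rfl (by linarith) (by linarith)
    have n3 := hnn v 1 (by linarith) (by linarith) le_rfl
    linarith
  have hpg : p = g := by rwa [hh, sub_eq_zero] at hh0
  -- evaluations
  set A : ℝ := ∏ j ∈ Finset.range m, (α + (m:ℝ) - j) with hA
  set B : ℝ := ∏ j ∈ Finset.range m, (β + (m:ℝ) - j) with hB
  have hA0 : 0 < A := Finset.prod_pos fun j hj => by have := hjrange j hj; linarith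
  have hB0 : 0 < B := Finset.prod_pos fun j hj => by have := hjrange j hj; linarith
  have hp1 : ∏ j ∈ Finset.range m, (-2*(α + (m:ℝ) - j)) = (-2:ℝ)^m * A := by
    rw [hA, Finset.prod_mul_distrib, Finset.prod_const, Finset.card_range]
  have hp2 : ∏ j ∈ Finset.range m, (2*(β + (m:ℝ) - j)) = (2:ℝ)^m * B := by
    rw [hB, Finset.prod_mul_distrib, Finset.prod_const, Finset.card_range]
  have he1 : p.eval 1 = c⁻¹ * ((-2)^m * A) := by
    rw [hpg, hg, eval_mul, eval_C, Gp_eval_one, hp1]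
  have he2 : p.eval (-1) = c⁻¹ * (2^m * B) := by
    rw [hpg, hg, eval_mul, eval_C, Gp_eval_neg_one, hp2]
  have hx : p.eval 1 / p.eval (-1) = (-1:ℝ)^m * (A / B) := by
    rw [he1, he2, show ((-2:ℝ))^m = (-1)^m * 2^m from by rw [← neg_one_mul, mul_pow]]
    have h2m : (2:ℝ)^m ≠ 0 := by positivity
    field_simp
  intro heq
  have h1 : (A / B)^N = 1 := by
    have habs := congrArg abs heq
    rw [abs_pow, hx, abs_mul, abs_pow, abs_neg, abs_one, one_pow, one_mul,
      abs_of_pos (div_pos hA0 hB0)] at habs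
    exact habs
  have hABne : A ≠ B := by
    rcases lt_or_gt_of_ne hαβ with hlt | hgt
    · exact ne_of_lt (Finset.prod_lt_prod_of_nonempty
        (fun j hj => by have := hjrange j hj; linarith)
        (fun j hj => by linarith)
        (Finset.nonempty_range_iff.mpr (by omega)))
    · exact (ne_of_lt (Finset.prod_lt_prod_of_nonempty
        (fun j hj => by have := hjrange j hj; linarith)
        (fun j hj => by linarith)
        (Finset.nonempty_range_iff.mpr (by omega)))).symm
  have hq1 : A / B ≠ 1 := fun hd => hABne ((div_eq_one_iff_eq hB0.ne').mp hd)
  rcases lt_trichotomy (A/B) 1 with hlt | he | hgt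
  · have := pow_lt_one₀ (by positivity) hlt (by omega : N ≠ 0)
    rw [h1] at this
    exact lt_irrefl 1 this
  · exact hq1 he
  · have := one_lt_pow₀ hgt (by omega : N ≠ 0)
    rw [h1] at this
    exact lt_irrefl 1 this
end

section
/- Let a < b be reals, λ > −1/2, m ≥ 1 an integer, and let φ(x) = (a+b−2x)/(a−b) (so φ(a) = −1, φ(b) = 1). Let C be a polynomial of degree exactly m satisfying ∫_{−1}^{1} C(t) q(t) (1−t²)^{λ+1/2} dt = 0 for every polynomial q of degree at most m−1 (so that C(1) ≠ 0 and all zeros of C lie in (−1,1)). Let ξ_1, …, ξ_m ∈ (a,b) be the preimages under φ of the zeros of C, and suppose real weights w_a, w_b, w_1, …, w_m satisfy the exactness property: ∫_a^b p(x) (1−φ(x)²)^{λ−1/2} dx = w_a p(a) + w_b p(b) + Σ_{i=1}^{m} w_i p(ξ_i) for every polynomial p of degree at most 2m+1. Then w_a = w_b = (b−a) / (4 C(1)²) · ∫_{−1}^{1} C(t)² (1−t²)^{λ−1/2} dt. -/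
open Polynomial intervalIntegral MeasureTheory

lemma stmt10_weight_cont {s : ℝ} (hs : 0 ≤ s) :
    Continuous fun t : ℝ => (1 - t ^ 2) ^ s :=
  (Real.continuous_rpow_const hs).comp (by continuity)

lemma stmt10_parity (lam : ℝ) (hlam : -(1/2 : ℝ) < lam) (m : ℕ) (C : Polynomial ℝ)
    (hCdeg : C.degree = (m : WithBot ℕ))
    (hCorth : ∀ q : Polynomial ℝ, q.degree < (m : WithBot ℕ) →
      ∫ t in (-1 : ℝ)..1, C.eval t * q.eval t * (1 - t ^ 2) ^ (lam + 1/2) = 0) :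
    ∀ x : ℝ, C.eval (-x) = (-1) ^ m * C.eval x := by
  set s : ℝ := lam + 1/2 with hs
  have hs0 : 0 < s := by simp only [hs]; linarith
  have hwcont : Continuous fun t : ℝ => (1 - t ^ 2) ^ s := stmt10_weight_cont hs0.le
  have hC0 : C ≠ 0 := fun h => by simp [h] at hCdeg
  have hCnat : C.natDegree = m := natDegree_eq_of_degree_eq_some hCdeg
  set D : Polynomial ℝ := C.comp (-X) - Polynomial.C ((-1 : ℝ) ^ m) * C with hD
  have evalD : ∀ x : ℝ, D.eval x = C.eval (-x) - (-1) ^ m * C.eval x := by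
    intro x; simp [hD]
  -- degree of D is < m
  have hcompnat : (C.comp (-X : Polynomial ℝ)).natDegree = m := by
    rw [natDegree_comp]; simp [hCnat]
  have hDnat : D.natDegree ≤ m := by
    refine le_trans (natDegree_sub_le _ _) (max_le (le_of_eq hcompnat) ?_)
    rcases eq_or_ne ((-1 : ℝ) ^ m) 0 with h | h
    · simp [h]
    · rw [natDegree_C_mul h, hCnat]
  have hcoeffm : D.coeff m = 0 := by
    have h1 : (C.comp (-X : Polynomial ℝ)).coeff m = (-1) ^ m * C.leadingCoeff := by
      have := comp_neg_X_leadingCoeff_eq C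
      rw [Polynomial.leadingCoeff, hcompnat] at this
      rw [this, hCnat]
    have h2 : (Polynomial.C ((-1 : ℝ) ^ m) * C).coeff m = (-1) ^ m * C.leadingCoeff := by
      rw [coeff_C_mul, Polynomial.leadingCoeff, hCnat]
    rw [hD, coeff_sub, h1, h2, sub_self]
  have hDdeg : D.degree < (m : WithBot ℕ) := by
    rw [Polynomial.degree_lt_iff_coeff_zero]
    intro k hk
    rcases eq_or_lt_of_le hk with h | h
    · exact h ▸ hcoeffm
    · exact coeff_eq_zero_of_degree_lt (lt_of_le_of_lt (degree_le_natDegree.trans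
        (by exact_mod_cast Nat.cast_le.mpr hDnat)) (by exact_mod_cast h))
  -- orthogonality of D
  have horthD : ∀ q : Polynomial ℝ, q.degree < (m : WithBot ℕ) →
      ∫ t in (-1 : ℝ)..1, D.eval t * q.eval t * (1 - t ^ 2) ^ s = 0 := by
    intro q hq
    have hq' : (q.comp (-X : Polynomial ℝ)).degree < (m : WithBot ℕ) := by
      rcases eq_or_ne q 0 with rfl | hq0
      · simpa using lt_of_le_of_lt (le_of_eq (by simp)) hq
      · refine lt_of_le_of_lt degree_le_natDegree ?_
        have : (q.comp (-X : Polynomial ℝ)).natDegree ≤ q.natDegree := by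
          rw [natDegree_comp]; simp
        have h2 : q.natDegree < m := (natDegree_lt_iff_degree_lt hq0).mpr hq
        exact_mod_cast lt_of_le_of_lt (Nat.cast_le.mpr this) (Nat.cast_lt.mpr h2)
    have key : ∫ t in (-1 : ℝ)..1, C.eval (-t) * q.eval t * (1 - t ^ 2) ^ s = 0 := by
      have hneg := integral_comp_neg (a := (-1 : ℝ)) (b := 1)
        (f := fun t => C.eval t * (q.comp (-X : Polynomial ℝ)).eval t * (1 - t ^ 2) ^ s)
      have hfun : ∀ x : ℝ, C.eval (-x) * (q.comp (-X : Polynomial ℝ)).eval (-x) *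
          (1 - (-x) ^ 2) ^ s = C.eval (-x) * q.eval x * (1 - x ^ 2) ^ s := by
        intro x; simp [eval_comp]
      rw [show (-(1 : ℝ)) = -1 by norm_num] at hneg
      simp only [hfun, neg_neg] at hneg
      rw [hneg]
      exact hCorth _ hq'
    have hi1 : IntervalIntegrable (fun t : ℝ => C.eval (-t) * q.eval t * (1 - t ^ 2) ^ s)
        volume (-1) 1 :=
      (((C.continuous_aeval.comp continuous_neg).mul q.continuous_aeval).mul
        hwcont).intervalIntegrable _ _
    have hi2 : IntervalIntegrable (fun t : ℝ => (-1 : ℝ) ^ m *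
        (C.eval t * q.eval t * (1 - t ^ 2) ^ s)) volume (-1) 1 :=
      (continuous_const.mul ((C.continuous_aeval.mul q.continuous_aeval).mul
        hwcont)).intervalIntegrable _ _
    have hsplit : ∫ t in (-1 : ℝ)..1, D.eval t * q.eval t * (1 - t ^ 2) ^ s =
        (∫ t in (-1 : ℝ)..1, C.eval (-t) * q.eval t * (1 - t ^ 2) ^ s) -
        ∫ t in (-1 : ℝ)..1, (-1 : ℝ) ^ m * (C.eval t * q.eval t * (1 - t ^ 2) ^ s) := by
      rw [← intervalIntegral.integral_sub hi1 hi2]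
      congr 1; funext t; rw [evalD]; ring
    rw [hsplit, key, intervalIntegral.integral_const_mul, hCorth q hq]
    ring
  -- D must be zero
  have hD0 : D = 0 := by
    by_contra hne
    have : ∃ t0 ∈ Set.Ioo (-1 : ℝ) 1, D.eval t0 ≠ 0 := by
      by_contra h
      push_neg at h
      exact hne (D.eq_zero_of_infinite_isRoot
        ((Set.Ioo_infinite (by norm_num)).mono fun x hx => h x hx))
    obtain ⟨t0, ht0mem, ht0⟩ := this
    set f : ℝ → ℝ := fun t => D.eval t * D.eval t * (1 - t ^ 2) ^ s with hf
    have hfc : Continuous f := (D.continuous_aeval.mul D.continuous_aeval).mul hwcont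
    have hft0 : 0 < f t0 := by
      apply mul_pos (mul_self_pos.mpr ht0)
      apply Real.rpow_pos_of_pos
      nlinarith [ht0mem.1, ht0mem.2]
    have hnb : ∀ᶠ x in nhds t0, 0 < f x :=
      hfc.continuousAt.preimage_mem_nhds (Ioi_mem_nhds hft0)
    obtain ⟨ε, hε, hball⟩ := Metric.eventually_nhds_iff.mp hnb
    set δ : ℝ := min (ε / 2) (min ((1 - t0) / 2) ((t0 + 1) / 2)) with hδ
    have hδ0 : 0 < δ := by
      apply lt_min (by linarith) (lt_min (by nlinarith [ht0mem.2]) (by nlinarith [ht0mem.1]))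
    set α : ℝ := t0 - δ
    set β : ℝ := t0 + δ
    have hαβ : α < β := by simp only [α, β]; linarith
    have hα : (-1 : ℝ) ≤ α := by
      have : δ ≤ (t0 + 1) / 2 := le_trans (min_le_right _ _) (min_le_right _ _)
      simp only [α]; linarith
    have hβ : β ≤ 1 := by
      have : δ ≤ (1 - t0) / 2 := le_trans (min_le_right _ _) (min_le_left _ _)
      simp only [β]; linarith
    have hnonneg : ∀ u : ℝ, -1 ≤ u → u ≤ 1 → 0 ≤ f u := by
      intro u h1 h2
      apply mul_nonneg (mul_self_nonneg _)
      apply Real.rpow_nonneg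
      nlinarith
    have hpos : 0 < ∫ x in α..β, f x := by
      apply intervalIntegral_pos_of_pos_on (hfc.intervalIntegrable _ _) _ hαβ
      intro x hx
      apply hball
      have hδε : δ ≤ ε / 2 := min_le_left _ _
      rw [Real.dist_eq, abs_lt]
      constructor
      · have := hx.1; simp only [α] at this; linarith
      · have := hx.2; simp only [β] at this; linarith
    have hsplit : ∫ x in (-1 : ℝ)..1, f x =
        (∫ x in (-1 : ℝ)..α, f x) + (∫ x in α..β, f x) + ∫ x in β..(1 : ℝ), f x := by
      rw [integral_add_adjacent_intervals (hfc.intervalIntegrable _ _) (hfc.intervalIntegrable _ _),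
        integral_add_adjacent_intervals (hfc.intervalIntegrable _ _) (hfc.intervalIntegrable _ _)]
    have h1 : 0 ≤ ∫ x in (-1 : ℝ)..α, f x :=
      intervalIntegral.integral_nonneg hα (fun u hu => hnonneg u hu.1 (le_trans hu.2 (by linarith)))
    have h2 : 0 ≤ ∫ x in β..(1 : ℝ), f x :=
      intervalIntegral.integral_nonneg hβ
        (fun u hu => hnonneg u (le_trans (by linarith) hu.1) hu.2)
    have hzero : ∫ x in (-1 : ℝ)..1, f x = 0 := horthD D hDdeg
    rw [hsplit] at hzero
    linarith
  intro x
  have := evalD x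
  rw [hD0] at this
  simp at this
  linarith [this]

/-- Endpoint weights of the Gegenbauer–Lobatto quadrature rule on `[a,b]`.
If the rule with endpoint nodes `a, b` and interior nodes `ξ i` (the φ-preimages of
the zeros of the degree-`m` polynomial `C` orthogonal w.r.t. `(1−t²)^{λ+1/2}`) is
exact for all polynomials of degree ≤ 2m+1 w.r.t. the weight `(1−φ(x)²)^{λ−1/2}`,
then `w_a = w_b = (b−a)/(4 C(1)²) · ∫_{-1}^1 C(t)² (1−t²)^{λ−1/2} dt`. -/
theorem stmt_10 (a b : ℝ) (hab : a < b) (lam : ℝ) (hlam : -(1/2 : ℝ) < lam)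
    (m : ℕ) (hm : 1 ≤ m)
    (φ : ℝ → ℝ) (hφ : ∀ x, φ x = (a + b - 2 * x) / (a - b))
    (C : Polynomial ℝ) (hCdeg : C.degree = (m : WithBot ℕ))
    (hCorth : ∀ q : Polynomial ℝ, q.degree < (m : WithBot ℕ) →
      ∫ t in (-1 : ℝ)..1, C.eval t * q.eval t * (1 - t ^ 2) ^ (lam + 1/2) = 0)
    (hC1 : C.eval 1 ≠ 0)
    (ξ : Fin m → ℝ) (hξ_mem : ∀ i, ξ i ∈ Set.Ioo a b)
    (hξ_zero : ∀ i, C.eval (φ (ξ i)) = 0)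
    (wa wb : ℝ) (w : Fin m → ℝ)
    (hexact : ∀ p : Polynomial ℝ, p.degree ≤ ((2 * m + 1 : ℕ) : WithBot ℕ) →
      ∫ x in a..b, p.eval x * (1 - (φ x) ^ 2) ^ (lam - 1/2) =
        wa * p.eval a + wb * p.eval b + ∑ i, w i * p.eval (ξ i)) :
    wa = wb ∧
      wb = (b - a) / (4 * (C.eval 1) ^ 2) *
        ∫ t in (-1 : ℝ)..1, (C.eval t) ^ 2 * (1 - t ^ 2) ^ (lam - 1/2) := by
  have parity := stmt10_parity lam hlam m C hCdeg hCorth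
  have hC1sq : C.eval (-1 : ℝ) ^ 2 = C.eval 1 ^ 2 := by
    have := parity 1
    rw [this, mul_pow, ← pow_mul, mul_comm m 2, pow_mul]
    norm_num
  have hba : (0 : ℝ) < b - a := by linarith
  have hba' : b - a ≠ 0 := ne_of_gt hba
  have hab' : a - b ≠ 0 := by intro h; apply hba'; linarith
  set s : ℝ := lam - 1/2 with hsdef
  set k : ℝ := 2 / (b - a) with hkdef
  set c0 : ℝ := -(a + b) / (b - a) with hc0def
  have hk : k ≠ 0 := by
    rw [hkdef]; positivity
  have hφ' : ∀ x, φ x = k * x + c0 := by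
    intro x; rw [hφ, hkdef, hc0def]; field_simp; ring
  have hend_a : k * a + c0 = -1 := by rw [hkdef, hc0def]; field_simp; ring
  have hend_b : k * b + c0 = 1 := by rw [hkdef, hc0def]; field_simp; ring
  have hCnat : C.natDegree = m := Polynomial.natDegree_eq_of_degree_eq_some hCdeg
  set ψ : Polynomial ℝ := Polynomial.C k * Polynomial.X + Polynomial.C c0 with hψdef
  have hψeval : ∀ x : ℝ, ψ.eval x = k * x + c0 := by intro x; simp [hψdef]
  have hψnat : ψ.natDegree = 1 := Polynomial.natDegree_linear hk
  have hcompnat : (C.comp ψ).natDegree = m := by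
    rw [Polynomial.natDegree_comp, hψnat, hCnat, mul_one]
  -- first test polynomial : (C ∘ ψ)^2
  set p1 : Polynomial ℝ := (C.comp ψ) ^ 2 with hp1def
  have hp1deg : p1.degree ≤ ((2 * m + 1 : ℕ) : WithBot ℕ) := by
    refine le_trans Polynomial.degree_le_natDegree ?_
    have : p1.natDegree ≤ 2 * m := by
      rw [hp1def]
      calc ((C.comp ψ) ^ 2).natDegree ≤ 2 * (C.comp ψ).natDegree :=
            Polynomial.natDegree_pow_le
        _ = 2 * m := by rw [hcompnat]
    exact_mod_cast Nat.cast_le.mpr (this.trans (Nat.le_succ _))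
  have hp1eval : ∀ x : ℝ, p1.eval x = (C.eval (k * x + c0)) ^ 2 := by
    intro x; rw [hp1def]; simp [Polynomial.eval_pow, Polynomial.eval_comp, hψeval]
  -- second test polynomial : ψ * (C ∘ ψ)^2
  set p2 : Polynomial ℝ := ψ * (C.comp ψ) ^ 2 with hp2def
  have hp2deg : p2.degree ≤ ((2 * m + 1 : ℕ) : WithBot ℕ) := by
    refine le_trans Polynomial.degree_le_natDegree ?_
    have : p2.natDegree ≤ 2 * m + 1 := by
      rw [hp2def]
      refine le_trans Polynomial.natDegree_mul_le ?_
      have h2 : ((C.comp ψ) ^ 2).natDegree ≤ 2 * m := by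
        calc ((C.comp ψ) ^ 2).natDegree ≤ 2 * (C.comp ψ).natDegree :=
              Polynomial.natDegree_pow_le
          _ = 2 * m := by rw [hcompnat]
      rw [hψnat]; omega
    exact_mod_cast Nat.cast_le.mpr this
  have hp2eval : ∀ x : ℝ, p2.eval x = (k * x + c0) * (C.eval (k * x + c0)) ^ 2 := by
    intro x; rw [hp2def]; simp [Polynomial.eval_pow, Polynomial.eval_comp, hψeval]
  -- the substituted integrals
  set f1 : ℝ → ℝ := fun t => (C.eval t) ^ 2 * (1 - t ^ 2) ^ s with hf1def
  set f2 : ℝ → ℝ := fun t => t * ((C.eval t) ^ 2 * (1 - t ^ 2) ^ s) with hf2def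
  set I : ℝ := ∫ t in (-1 : ℝ)..1, f1 t with hIdef
  -- equation E1
  have E1 := hexact p1 hp1deg
  have hrw1 : ∀ x : ℝ, p1.eval x * (1 - (φ x) ^ 2) ^ (lam - 1/2) = f1 (k * x + c0) := by
    intro x; rw [hp1eval, hφ', hf1def]
  rw [show (fun x => p1.eval x * (1 - (φ x) ^ 2) ^ (lam - 1/2)) = fun x => f1 (k * x + c0) from
    funext hrw1] at E1
  rw [intervalIntegral.integral_comp_mul_add f1 hk c0, hend_a, hend_b] at E1
  have hsum1 : ∑ i, w i * p1.eval (ξ i) = 0 := by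
    apply Finset.sum_eq_zero
    intro i _
    rw [hp1eval, ← hφ', hξ_zero i]
    ring
  rw [hsum1, hp1eval a, hp1eval b, hend_a, hend_b] at E1
  -- equation E2
  have E2 := hexact p2 hp2deg
  have hrw2 : ∀ x : ℝ, p2.eval x * (1 - (φ x) ^ 2) ^ (lam - 1/2) = f2 (k * x + c0) := by
    intro x; rw [hp2eval, hφ', hf2def]; ring
  rw [show (fun x => p2.eval x * (1 - (φ x) ^ 2) ^ (lam - 1/2)) = fun x => f2 (k * x + c0) from
    funext hrw2] at E2
  rw [intervalIntegral.integral_comp_mul_add f2 hk c0, hend_a, hend_b] at E2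
  have hsum2 : ∑ i, w i * p2.eval (ξ i) = 0 := by
    apply Finset.sum_eq_zero
    intro i _
    rw [hp2eval, ← hφ', hξ_zero i]
    ring
  rw [hsum2, hp2eval a, hp2eval b, hend_a, hend_b] at E2
  -- oddness : the f2 integral vanishes
  have hCsq : ∀ x : ℝ, C.eval (-x) ^ 2 = C.eval x ^ 2 := by
    intro x
    rw [parity x, mul_pow, ← pow_mul, mul_comm m 2, pow_mul]
    norm_num
  have hJ : (∫ t in (-1 : ℝ)..1, f2 t) = 0 := by
    have hodd := intervalIntegral.integral_comp_neg (a := (-1 : ℝ)) (b := 1) (f := f2)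
    have hfun : ∀ x : ℝ, f2 (-x) = -(f2 x) := by
      intro x
      show -x * (C.eval (-x) ^ 2 * (1 - (-x) ^ 2) ^ s) = -(x * (C.eval x ^ 2 * (1 - x ^ 2) ^ s))
      rw [show ((-x : ℝ)) ^ 2 = x ^ 2 from by ring, hCsq x]
      ring
    simp only [hfun, intervalIntegral.integral_neg, neg_neg] at hodd
    linarith
  rw [hJ] at E2
  -- put everything together
  have hkinv : k⁻¹ = (b - a) / 2 := by rw [hkdef, inv_div]
  rw [hkinv, smul_eq_mul] at E1 E2
  rw [hC1sq] at E1 E2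
  have hC1sq' : C.eval 1 ^ 2 ≠ 0 := pow_ne_zero 2 hC1
  have hwawb : wa = wb := by
    have h : wa * C.eval 1 ^ 2 = wb * C.eval 1 ^ 2 := by linarith
    exact mul_right_cancel₀ hC1sq' h
  refine ⟨hwawb, ?_⟩
  rw [hwawb] at E1
  have hIe : (∫ x in (-1 : ℝ)..1, f1 x) = I := rfl
  rw [hIe] at E1
  field_simp
  linarith
end
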